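/- Let (X,S) be a non-degenerate, involutive and braided set-theoretical solution on a finite set X. Then (X,S) is indecomposable if and only if the subgroup of the permutation group of X generated by {g_x : x ∈ X} acts transitively on X. (This is the combinatorial content of the theorem that the structure monoid of (X,S) is a Δ-pure Garside monoid if and only if (X,S) is indecomposable.) -/

import Mathlib

namespace YBE

/-- `(X,S)` is non-degenerate: all the maps `g_x = y ↦ S(x,y).1` and
`f_y = x ↦ S(x,y).2` are bijective. -/
def Nondegenerate {X : Type*} (S : X × X → X × X) : Prop :=
  (∀ x : X, Function.Bijective fun y => (S (x, y)).1) ∧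
  (∀ y : X, Function.Bijective fun x => (S (x, y)).2)

/-- `(X,S)` is involutive: `S ∘ S = id`. -/
def InvolutiveSol {X : Type*} (S : X × X → X × X) : Prop := S ∘ S = id

/-- `S¹² = S × id` on `X × X × X`. -/
def S12 {X : Type*} (S : X × X → X × X) : X × X × X → X × X × X :=
  fun p => ((S (p.1, p.2.1)).1, (S (p.1, p.2.1)).2, p.2.2)

/-- `S²³ = id × S` on `X × X × X`. -/
def S23 {X : Type*} (S : X × X → X × X) : X × X × X → X × X × X :=
  fun p => (p.1, S (p.2.1, p.2.2))

/-- `(X,S)` is braided: `S¹² ∘ S²³ ∘ S¹² = S²³ ∘ S¹² ∘ S²³`. -/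
def BraidedSol {X : Type*} (S : X × X → X × X) : Prop :=
  S12 S ∘ S23 S ∘ S12 S = S23 S ∘ S12 S ∘ S23 S

/-- The map `g_x : y ↦ S(x,y).1`. -/
def gmap {X : Type*} (S : X × X → X × X) (x : X) : X → X := fun y => (S (x, y)).1

/-- The map `f_y : x ↦ S(x,y).2`. -/
def fmap {X : Type*} (S : X × X → X × X) (y : X) : X → X := fun x => (S (x, y)).2

/-- The inverse `g_x⁻¹` of the (bijective) map `g_x`. -/
noncomputable def ginv {X : Type*} [Nonempty X] (S : X × X → X × X) (x : X) : X → X :=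
  Function.invFun (gmap S x)

/-- The inverse `f_y⁻¹` of the (bijective) map `f_y`. -/
noncomputable def finv {X : Type*} [Nonempty X] (S : X × X → X × X) (y : X) : X → X :=
  Function.invFun (fmap S y)

/-- The defining relations of the structure monoid: `x·y = t·z` whenever `S(x,y) = (t,z)`. -/
def ybRel {X : Type*} (S : X × X → X × X) : FreeMonoid X → FreeMonoid X → Prop :=
  fun a b => ∃ x y : X, a = FreeMonoid.of x * FreeMonoid.of y ∧
    b = FreeMonoid.of (S (x, y)).1 * FreeMonoid.of (S (x, y)).2

/-- The structure monoid of `(X,S)`: the monoid presented by generating set `X` and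
relations `x·y = t·z` for each `x,y,t,z` with `S(x,y) = (t,z)`. -/
abbrev StructureMonoid {X : Type*} (S : X × X → X × X) : Type _ :=
  (conGen (ybRel S)).Quotient

/-- The image in the structure monoid of a generator `x ∈ X`. -/
def smi {X : Type*} (S : X × X → X × X) (x : X) : StructureMonoid S :=
  (conGen (ybRel S)).mk' (FreeMonoid.of x)

/-- The defining relations of the structure group, as elements of the free group. -/
def ybGRels {X : Type*} (S : X × X → X × X) : Set (FreeGroup X) :=
  {w | ∃ x y : X, w = FreeGroup.of x * FreeGroup.of y *
    (FreeGroup.of (S (x, y)).1 * FreeGroup.of (S (x, y)).2)⁻¹}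

/-- The structure group of `(X,S)`: the group presented by generating set `X` and
relations `x·y = t·z` for each `x,y,t,z` with `S(x,y) = (t,z)`. -/
abbrev StructureGroup {X : Type*} (S : X × X → X × X) : Type _ :=
  PresentedGroup (ybGRels S)

/-- `a` left-divides `b`. -/
def LDvd {M : Type*} [Monoid M] (a b : M) : Prop := ∃ c, b = a * c

/-- `m` is a right lcm of the family `a`: each `a i` left-divides `m`, and `m`
left-divides every common right multiple of the `a i`. -/
def IsRightLcm {M : Type*} [Monoid M] {ι : Sort*} (a : ι → M) (m : M) : Prop :=
  (∀ i, LDvd (a i) m) ∧ ∀ w, (∀ i, LDvd (a i) w) → LDvd m w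

/-- The subgroup of the permutation group of `X` generated by the maps `g_x`. -/
def gGroup {X : Type*} (S : X × X → X × X) : Subgroup (Equiv.Perm X) :=
  Subgroup.closure {e : Equiv.Perm X | ∃ x : X, ⇑e = gmap S x}

/-- The orbit of `y` under the subgroup generated by the maps `g_x`. -/
def gOrbit {X : Type*} (S : X × X → X × X) (y : X) : Set X :=
  {z : X | ∃ e ∈ gGroup S, e y = z}


/-- `Y ⊆ X` is an invariant subset: `S(Y × Y) ⊆ Y × Y`. -/
def InvariantSet {X : Type*} (S : X × X → X × X) (Y : Set X) : Prop :=
  ∀ a ∈ Y, ∀ b ∈ Y, (S (a, b)).1 ∈ Y ∧ (S (a, b)).2 ∈ Y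

/-- The restriction of `S` to an invariant subset `Y` is non-degenerate. -/
def NondegenerateOn {X : Type*} (S : X × X → X × X) (Y : Set X) : Prop :=
  (∀ x ∈ Y, Set.BijOn (gmap S x) Y Y) ∧ (∀ y ∈ Y, Set.BijOn (fmap S y) Y Y)

/-- `(X,S)` is decomposable: `X` is the union of two disjoint nonempty invariant subsets
on which the restrictions of `S` are non-degenerate. -/
def Decomposable {X : Type*} (S : X × X → X × X) : Prop :=
  ∃ Y Z : Set X, Y.Nonempty ∧ Z.Nonempty ∧ Disjoint Y Z ∧ Y ∪ Z = Set.univ ∧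
    InvariantSet S Y ∧ InvariantSet S Z ∧ NondegenerateOn S Y ∧ NondegenerateOn S Z

section Aux
variable {X : Type*} (S : X × X → X × X)

/-- The permutation of `X` given by `g_x`. -/
noncomputable def gperm (hnd : Nondegenerate S) (x : X) : Equiv.Perm X :=
  Equiv.ofBijective (gmap S x) (hnd.1 x)

lemma gperm_coe (hnd : Nondegenerate S) (x : X) : ⇑(gperm S hnd x) = gmap S x := rfl

lemma gperm_mem (hnd : Nondegenerate S) (x : X) : gperm S hnd x ∈ gGroup S :=
  Subgroup.subset_closure ⟨x, rfl⟩

/-- Second component of involutivity: `g_{S(a,b).1} (S(a,b).2) = a`. -/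
lemma ginv_snd (hinv : InvolutiveSol S) (a b : X) :
    gmap S (S (a, b)).1 (S (a, b)).2 = a := by
  have h := congrFun hinv (a, b)
  simp only [Function.comp_apply, id_eq] at h
  show (S ((S (a, b)).1, (S (a, b)).2)).1 = a
  rw [Prod.mk.eta, h]

lemma rel_trans {u v w : X} (h1 : ∃ e ∈ gGroup S, e u = v) (h2 : ∃ e ∈ gGroup S, e v = w) :
    ∃ e ∈ gGroup S, e u = w := by
  obtain ⟨e, he, rfl⟩ := h1
  obtain ⟨e', he', rfl⟩ := h2
  exact ⟨e' * e, mul_mem he' he, Equiv.Perm.mul_apply e' e u⟩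

lemma rel_symm {u v : X} (h : ∃ e ∈ gGroup S, e u = v) : ∃ e ∈ gGroup S, e v = u := by
  obtain ⟨e, he, rfl⟩ := h
  exact ⟨e⁻¹, inv_mem he, Equiv.symm_apply_apply e u⟩

lemma rel_fst (hnd : Nondegenerate S) (a b : X) : ∃ e ∈ gGroup S, e b = (S (a, b)).1 :=
  ⟨gperm S hnd a, gperm_mem S hnd a, rfl⟩

lemma rel_snd (hnd : Nondegenerate S) (hinv : InvolutiveSol S) (a b : X) :
    ∃ e ∈ gGroup S, e (S (a, b)).2 = a :=
  ⟨gperm S hnd (S (a, b)).1, gperm_mem S hnd _, ginv_snd S hinv a b⟩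

/-- A set saturated under the orbit relation is invariant with nondegenerate restriction. -/
lemma saturated_good (hnd : Nondegenerate S) (hinv : InvolutiveSol S) (A : Set X)
    (hA : ∀ u v : X, (∃ e ∈ gGroup S, e u = v) → (u ∈ A ↔ v ∈ A)) :
    InvariantSet S A ∧ NondegenerateOn S A := by
  constructor
  · intro a ha b hb
    exact ⟨(hA b _ (rel_fst S hnd a b)).1 hb, (hA _ a (rel_snd S hnd hinv a b)).2 ha⟩
  · constructor
    · intro x _
      refine ⟨fun v hv => (hA v _ (rel_fst S hnd x v)).1 hv, (hnd.1 x).injective.injOn, ?_⟩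
      intro w hw
      refine ⟨(gperm S hnd x)⁻¹ w, ?_, (gperm S hnd x).apply_symm_apply w⟩
      exact (hA w _ (rel_symm S ⟨gperm S hnd x, gperm_mem S hnd x,
        (gperm S hnd x).apply_symm_apply w⟩)).1 hw
    · intro y _
      refine ⟨fun u hu => (hA u _ (rel_symm S (rel_snd S hnd hinv u y))).1 hu,
        (hnd.2 y).injective.injOn, ?_⟩
      intro w hw
      obtain ⟨u, hu⟩ := (hnd.2 y).surjective w
      refine ⟨u, ?_, hu⟩
      have : ∃ e ∈ gGroup S, e w = u := by
        rw [← hu]; exact rel_snd S hnd hinv u y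
      exact (hA w u this).1 hw

end Aux

/-- `(X,S)` is indecomposable iff the subgroup generated by the maps `g_x` acts
transitively on `X`. -/
theorem stmt10 {X : Type*} [Finite X] (S : X × X → X × X)
    (hnd : Nondegenerate S) (hinv : InvolutiveSol S) (hbr : BraidedSol S) :
    ¬ Decomposable S ↔ ∀ a b : X, ∃ e ∈ gGroup S, e a = b := by
  constructor
  · -- indecomposable → transitive
    intro hind a b
    by_contra hab
    apply hind
    have hsatY : ∀ u v : X, (∃ e ∈ gGroup S, e u = v) → (u ∈ gOrbit S a ↔ v ∈ gOrbit S a) :=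
      fun u v h => ⟨fun hu => rel_trans S hu h, fun hv => rel_trans S hv (rel_symm S h)⟩
    have hsatZ : ∀ u v : X, (∃ e ∈ gGroup S, e u = v) →
        (u ∈ (gOrbit S a)ᶜ ↔ v ∈ (gOrbit S a)ᶜ) :=
      fun u v h => not_iff_not.mpr (hsatY u v h)
    obtain ⟨hIY, hNY⟩ := saturated_good S hnd hinv (gOrbit S a) hsatY
    obtain ⟨hIZ, hNZ⟩ := saturated_good S hnd hinv (gOrbit S a)ᶜ hsatZ
    exact ⟨gOrbit S a, (gOrbit S a)ᶜ, ⟨a, 1, one_mem _, rfl⟩, ⟨b, fun hb => hab hb⟩,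
      disjoint_compl_right, Set.union_compl_self _, hIY, hIZ, hNY, hNZ⟩
  · -- transitive → indecomposable
    intro htrans hdec
    obtain ⟨Y, Z, ⟨y0, hy0⟩, ⟨z0, hz0⟩, hdisj, huniv, _, _, hNY, hNZ⟩ := hdec
    -- every generator maps Y into Y and Z into Z
    have gen : ∀ x : X, Set.MapsTo (gmap S x) Y Y ∧ Set.MapsTo (gmap S x) Z Z := by
      intro x
      have hginj := (hnd.1 x).injective
      have hx : x ∈ Y ∪ Z := by rw [huniv]; trivial
      have cross : ∀ A B : Set X, Disjoint A B → A ∪ B = Set.univ →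
          Set.BijOn (gmap S x) A A → Set.MapsTo (gmap S x) B B := by
        intro A B hd hu hbij v hv
        have : gmap S x v ∈ A ∪ B := by rw [hu]; trivial
        rcases this with h | h
        · obtain ⟨u, hu', he⟩ := hbij.surjOn h
          have : u = v := hginj he
          exact absurd (this ▸ hu') (Set.disjoint_right.mp hd hv)
        · exact h
      rcases hx with hx | hx
      · exact ⟨(hNY.1 x hx).mapsTo, cross Y Z hdisj huniv (hNY.1 x hx)⟩
      · exact ⟨cross Z Y hdisj.symm (Set.union_comm Y Z ▸ huniv) (hNZ.1 x hx),
          (hNZ.1 x hx).mapsTo⟩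
    -- hence every element of the group maps Y into Y
    have key : ∀ e ∈ gGroup S, Set.MapsTo ⇑e Y Y ∧ Set.MapsTo ⇑e Z Z := by
      intro e he
      refine Subgroup.closure_induction ?_ ?_ ?_ ?_ he
      · rintro x ⟨x0, hx0⟩
        rw [hx0]; exact gen x0
      · constructor <;> · intro v hv; simpa using hv
      · intro p q _ _ hp hq
        constructor <;>
          · intro v hv; rw [Equiv.Perm.mul_apply]
            first
            | exact hp.1 (hq.1 hv)
            | exact hp.2 (hq.2 hv)
      · intro p _ hp
        have hY : ∀ v ∈ Y, p⁻¹ v ∈ Y := by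
          intro v hv
          have hm : p⁻¹ v ∈ Y ∪ Z := by rw [huniv]; trivial
          rcases hm with h | h
          · exact h
          · have : v ∈ Z := by
              have := hp.2 h
              rwa [Equiv.Perm.inv_def, Equiv.apply_symm_apply] at this
            exact absurd this (Set.disjoint_left.mp hdisj hv)
        have hZ : ∀ v ∈ Z, p⁻¹ v ∈ Z := by
          intro v hv
          have hm : p⁻¹ v ∈ Y ∪ Z := by rw [huniv]; trivial
          rcases hm with h | h
          · have : v ∈ Y := by
              have := hp.1 h
              rwa [Equiv.Perm.inv_def, Equiv.apply_symm_apply] at this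
            exact absurd hv (Set.disjoint_left.mp hdisj this)
          · exact h
        exact ⟨hY, hZ⟩
    obtain ⟨e, he, hee⟩ := htrans y0 z0
    exact Set.disjoint_left.mp hdisj (hee ▸ (key e he).1 hy0) hz0
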